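/- Let (V,d) be a finite metric space, t ≥ 1 an integer, and let F, F* ⊆ V be nonempty sets with |F| = |F*| = k. Suppose F is t-swap locally optimal for the ℓ_p objective, i.e., for every R ⊆ F and A ⊆ V with |R| = |A| ≤ t we have Φ_p((F \ R) ∪ A) ≥ Φ_p(F). Then: (1) for p = 1, Φ_1(F) ≤ (3 + 2/t)·Φ_1(F*); (2) for p = 2, Φ_2(F) ≤ (5 + 4/t)·Φ_2(F*); (3) for every real p ≥ 2, Φ_p(F) ≤ (3 + 2/t)·p·Φ_p(F*). -/

import Mathlib

open Finset

/-- Distance from a client `j` to a nonempty facility set `F`: `min_{f ∈ F} d(j,f)`. -/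
noncomputable def distSet {V : Type*} [MetricSpace V] (j : V) (F : Finset V)
    (hF : F.Nonempty) : ℝ :=
  F.inf' hF fun f => dist j f

/-- The ℓ_p-norm cost of a nonempty facility set `F`:
`Φ_p(F) = (∑_{j ∈ V} d(j,F)^p)^{1/p}`. -/
noncomputable def phiP {V : Type*} [MetricSpace V] [Fintype V] (p : ℝ) (F : Finset V)
    (hF : F.Nonempty) : ℝ :=
  (∑ j : V, distSet j F hF ^ p) ^ (1 / p)

/-- Approximation guarantees for the `t`-swap local-search algorithm for the
ℓ_p objective: `(3 + 2/t)` for `p = 1`, `(5 + 4/t)` for `p = 2`, and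
`(3 + 2/t)·p` for every real `p ≥ 2`. -/
lemma distSet_nonneg {V : Type*} [MetricSpace V] (j : V) (F : Finset V) (hF : F.Nonempty) :
    0 ≤ distSet j F hF :=
  Finset.le_inf' hF _ fun _ _ => dist_nonneg

lemma distSet_le {V : Type*} [MetricSpace V] (j : V) {F : Finset V} (hF : F.Nonempty)
    {f : V} (hf : f ∈ F) : distSet j F hF ≤ dist j f :=
  Finset.inf'_le _ hf

open Real in

lemma exp_taylor4 {s : ℝ} (h0 : 0 ≤ s) (h1 : s ≤ 1) :
    Real.exp s ≤ 1 + s + s^2/2 + s^3/6 + 5*s^4/96 := by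
  have h := Real.exp_bound' h0 h1 (n := 4) (by norm_num)
  have e : (∑ m ∈ Finset.range 4, s ^ m / m.factorial) = 1 + s + s^2/2 + s^3/6 := by
    rw [Finset.sum_range_succ, Finset.sum_range_succ, Finset.sum_range_succ,
      Finset.sum_range_succ, Finset.sum_range_zero]
    norm_num [Nat.factorial]
  rw [e] at h
  calc Real.exp s ≤ 1 + s + s^2/2 + s^3/6 + s ^ 4 * (4+1) / (Nat.factorial 4 * 4) := h
    _ ≤ 1 + s + s^2/2 + s^3/6 + 5*s^4/96 := by norm_num [Nat.factorial]; nlinarith [pow_nonneg h0 4]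

lemma numeric_key {p lam : ℝ} (hp : 2 ≤ p) (hl1 : 1 < lam) (hl2 : lam ≤ 2) :
    ((2*lam+1)*p) ^ (-p) + lam * (1 + 2/((2*lam+1)*p)) ^ p ≤ 1 + lam := by
  set s : ℝ := 2/(2*lam+1) with hs
  have h2l : (0:ℝ) < 2*lam+1 := by linarith
  have hX1 : (1:ℝ) ≤ (2*lam+1)*p := by nlinarith
  have hXpos : (0:ℝ) < (2*lam+1)*p := by nlinarith
  have hs0 : 0 < s := by positivity
  have hs1 : s < 2/3 := by
    rw [hs, div_lt_div_iff₀ h2l (by norm_num)]; linarith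
  have hseq : s * (2*lam+1) = 2 := by rw [hs]; field_simp
  -- first term ≤ s^2/16
  have h1 : ((2*lam+1)*p) ^ (-p) ≤ s^2/16 := by
    have e1 : ((2*lam+1)*p) ^ (-p) ≤ ((2*lam+1)*p) ^ (-2:ℝ) :=
      Real.rpow_le_rpow_of_exponent_le hX1 (by linarith)
    have e2 : ((2*lam+1)*p) ^ (-2:ℝ) = 1/((2*lam+1)*p)^2 := by
      rw [Real.rpow_neg hXpos.le, Real.rpow_two]
      simp [one_div]
    have hp2 : (4:ℝ) ≤ p^2 := by nlinarith
    have e3 : 1/((2*lam+1)*p)^2 ≤ 1/(4*(2*lam+1)^2) := by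
      apply one_div_le_one_div_of_le (by positivity)
      nlinarith [mul_le_mul_of_nonneg_left hp2 (sq_nonneg (2*lam+1))]
    have e4 : 1/(4*(2*lam+1)^2) = s^2/16 := by
      rw [hs]; field_simp; ring
    calc ((2*lam+1)*p) ^ (-p) ≤ 1/((2*lam+1)*p)^2 := e1.trans_eq e2
      _ ≤ s^2/16 := e3.trans_eq e4
  -- second term ≤ lam * exp s
  have h2 : (1 + 2/((2*lam+1)*p)) ^ p ≤ Real.exp s := by
    have hu0 : 0 < 2/((2*lam+1)*p) := by positivity
    have hb : (0:ℝ) < 1 + 2/((2*lam+1)*p) := by linarith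
    rw [← Real.exp_log hb, ← Real.exp_mul]
    apply Real.exp_le_exp.2
    have hlog : Real.log (1 + 2/((2*lam+1)*p)) ≤ 2/((2*lam+1)*p) := by
      have := Real.log_le_sub_one_of_pos hb
      linarith
    have : Real.log (1 + 2/((2*lam+1)*p)) * p ≤ (2/((2*lam+1)*p)) * p :=
      mul_le_mul_of_nonneg_right hlog (by linarith)
    refine this.trans_eq ?_
    rw [hs]
    field_simp
  have h3 : Real.exp s ≤ 1 + s + s^2/2 + s^3/6 + 5*s^4/96 :=
    exp_taylor4 hs0.le (by linarith)
  have hlam : 0 < lam := by linarith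
  have key : s^2/16 + lam * (1 + s + s^2/2 + s^3/6 + 5*s^4/96) ≤ 1 + lam := by
    nlinarith [hseq, hs0, sq_nonneg s, pow_pos hs0 3, pow_pos hs0 4]
  calc ((2*lam+1)*p) ^ (-p) + lam * (1 + 2/((2*lam+1)*p)) ^ p
      ≤ s^2/16 + lam * (1 + s + s^2/2 + s^3/6 + 5*s^4/96) := by
        have := (h2.trans h3)
        nlinarith [h1, mul_le_mul_of_nonneg_left this hlam.le]
    _ ≤ 1 + lam := key


open Real in
lemma scalar_ge2 {p lam D Ds : ℝ} (hp : 2 ≤ p) (hl1 : 1 < lam) (hl2 : lam ≤ 2)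
    (hD : 0 ≤ D) (hDs : 0 ≤ Ds)
    (h : (1+lam) * D^p ≤ Ds^p + lam * (2*Ds + D)^p) : D ≤ (2*lam+1)*p*Ds := by
  have hppos : (0:ℝ) < p := by linarith
  have hlam0 : (0:ℝ) < lam := by linarith
  by_contra hcon
  push_neg at hcon
  set x0 : ℝ := (2*lam+1)*p with hx0
  have hx0pos : 0 < x0 := by positivity
  rcases eq_or_lt_of_le hDs with hDs0 | hDs0
  · -- Ds = 0
    rw [← hDs0] at h hcon
    have hD0 : 0 < D := by simpa using hcon.trans_le' (by simp)
    have : (2*(0:ℝ) + D) = D := by ring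
    rw [this] at h
    have hDp : 0 < D ^ p := Real.rpow_pos_of_pos hD0 p
    have : (0:ℝ)^p = 0 := Real.zero_rpow (by linarith)
    rw [this] at h
    nlinarith
  · -- Ds > 0
    have hDpos : 0 < D := lt_trans (by positivity) hcon
    set r : ℝ := D / Ds with hr
    have hrx0 : x0 < r := (lt_div_iff₀ hDs0).2 hcon
    have hrpos : 0 < r := hx0pos.trans hrx0
    have hDeq : D = r * Ds := by rw [hr]; field_simp
    -- divide h by Ds^p
    have hDsp : 0 < Ds ^ p := Real.rpow_pos_of_pos hDs0 p
    have h2 : (1+lam) * r^p ≤ 1 + lam * (2+r)^p := by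
      have e1 : D ^ p = r^p * Ds^p := by
        rw [hDeq, Real.mul_rpow hrpos.le hDs0.le]
      have e2 : (2*Ds + D)^p = (2+r)^p * Ds^p := by
        have : 2*Ds + D = (2+r) * Ds := by rw [hDeq]; ring
        rw [this, Real.mul_rpow (by linarith) hDs0.le]
      rw [e1, e2] at h
      have := (mul_le_mul_iff_left₀ hDsp).1 (by linarith : ((1+lam) * r^p) * Ds^p ≤ (1 + lam * (2+r)^p) * Ds^p)
      linarith
    -- now contradiction: 1 + lam*(2+r)^p < (1+lam) r^p
    have hrp : 0 < r ^ p := Real.rpow_pos_of_pos hrpos p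
    have key1 : (1:ℝ) < r^p * x0^(-p) := by
      have : r^(-p) < x0^(-p) := Real.rpow_lt_rpow_of_neg hx0pos hrx0 (by linarith)
      have e : r^p * r^(-p) = 1 := by
        rw [← Real.rpow_add hrpos]; simp
      calc (1:ℝ) = r^p * r^(-p) := e.symm
        _ < r^p * x0^(-p) := by exact (mul_lt_mul_iff_right₀ hrp).2 this
    have key2 : (2+r)^p ≤ r^p * (1+2/x0)^p := by
      have e : (2+r)^p = r^p * (1+2/r)^p := by
        rw [← Real.mul_rpow hrpos.le (by positivity)]
        congr 1; field_simp; ring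
      rw [e]
      have hb : (1+2/r) ≤ (1+2/x0) := by
        have : 2/r ≤ 2/x0 := by
          apply div_le_div_of_nonneg_left (by norm_num) hx0pos hrx0.le
        linarith
      exact mul_le_mul_of_nonneg_left (Real.rpow_le_rpow (by positivity) hb hppos.le) hrp.le
    have hnum := numeric_key hp hl1 hl2
    rw [← hx0] at hnum
    -- combine
    have : 1 + lam * (2+r)^p < r^p * (x0^(-p) + lam * (1+2/x0)^p) := by
      have t2 : lam * (2+r)^p ≤ lam * (r^p * (1+2/x0)^p) := mul_le_mul_of_nonneg_left key2 hlam0.le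
      have : r^p * (x0^(-p) + lam * (1+2/x0)^p) = r^p * x0^(-p) + lam * (r^p * (1+2/x0)^p) := by ring
      rw [this]
      linarith
    have hfin : r^p * (x0^(-p) + lam * (1+2/x0)^p) ≤ r^p * (1+lam) :=
      mul_le_mul_of_nonneg_left hnum hrp.le
    nlinarith


set_option maxHeartbeats 3000000 in
theorem lp_t_swap_local_opt {V : Type*} [MetricSpace V] [Fintype V] [DecidableEq V]
    (p : ℝ) (hp : 1 ≤ p) (t : ℕ) (ht : 1 ≤ t) (k : ℕ)
    (F Fstar : Finset V) (hF : F.Nonempty) (hFstar : Fstar.Nonempty)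
    (hcardF : F.card = k) (hcardFstar : Fstar.card = k)
    (hlocal : ∀ R ⊆ F, ∀ A : Finset V, R.card = A.card → A.card ≤ t →
      ∀ hne : ((F \ R) ∪ A).Nonempty, phiP p ((F \ R) ∪ A) hne ≥ phiP p F hF) :
    (p = 1 → phiP p F hF ≤ (3 + 2 / (t : ℝ)) * phiP p Fstar hFstar) ∧
    (p = 2 → phiP p F hF ≤ (5 + 4 / (t : ℝ)) * phiP p Fstar hFstar) ∧
    (2 ≤ p → phiP p F hF ≤ (3 + 2 / (t : ℝ)) * p * phiP p Fstar hFstar) := by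
  classical
  have hppos : (0:ℝ) < p := lt_of_lt_of_le one_pos hp
  have hpne : p ≠ 0 := ne_of_gt hppos
  have htpos : (0:ℝ) < (t:ℝ) := by exact_mod_cast Nat.lt_of_lt_of_le Nat.zero_lt_one ht
  set lam : ℝ := 1 + 1/(t:ℝ) with hlam
  have hlam1 : 1 < lam := by
    have h1t : 0 < 1/(t:ℝ) := by positivity
    rw [hlam]; linarith
  have hlam2 : lam ≤ 2 := by
    rw [hlam]
    have : 1/(t:ℝ) ≤ 1 := by
      rw [div_le_one htpos]; exact_mod_cast ht
    linarith
  -- distance shorthands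
  set d : V → ℝ := fun j => distSet j F hF with hd
  set dstar : V → ℝ := fun j => distSet j Fstar hFstar with hdstar
  have hd0 : ∀ j, 0 ≤ d j := fun j => distSet_nonneg j F hF
  have hds0 : ∀ j, 0 ≤ dstar j := fun j => distSet_nonneg j Fstar hFstar
  -- nearest facility maps
  have hσex : ∀ j : V, ∃ f, f ∈ F ∧ dist j f = d j := by
    intro j
    obtain ⟨f, hf, he⟩ := F.exists_mem_eq_inf' hF (fun f => dist j f)
    exact ⟨f, hf, he.symm⟩
  choose σ hσF hσd using hσex
  have hσsex : ∀ j : V, ∃ f, f ∈ Fstar ∧ dist j f = dstar j := by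
    intro j
    obtain ⟨f, hf, he⟩ := Fstar.exists_mem_eq_inf' hFstar (fun f => dist j f)
    exact ⟨f, hf, he.symm⟩
  choose σs hσsF hσsd using hσsex
  have hηex : ∀ y : V, ∃ f, f ∈ F ∧ dist y f = distSet y F hF := by
    intro y
    obtain ⟨f, hf, he⟩ := F.exists_mem_eq_inf' hF (fun f => dist y f)
    exact ⟨f, hf, he.symm⟩
  choose η hηF hηd using hηex
  have hηmin : ∀ y : V, ∀ f ∈ F, dist y (η y) ≤ dist y f := by
    intro y f hf
    rw [hηd y]
    exact distSet_le y hF hf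
  -- the u and v quantities
  set u : V → ℝ := fun j => dstar j ^ p - d j ^ p with hu
  set v : V → ℝ := fun j => (2 * dstar j + d j) ^ p - d j ^ p with hv
  have hv0 : ∀ j, 0 ≤ v j := by
    intro j
    have : d j ^ p ≤ (2 * dstar j + d j) ^ p :=
      Real.rpow_le_rpow (hd0 j) (by have := hds0 j; linarith) hppos.le
    simp only [hv]; linarith
  -- indicator sums
  set U : Finset V → ℝ := fun A => ∑ j : V, if σs j ∈ A then u j else 0 with hU
  set W : Finset V → ℝ := fun R => ∑ j : V, if σ j ∈ R then v j else 0 with hW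
  have hWnn : ∀ R, 0 ≤ W R := by
    intro R
    apply Finset.sum_nonneg
    intro j _
    by_cases h : σ j ∈ R <;> simp [h, hv0 j]
  -- local optimality in power-sum form
  have hswap : ∀ (R A : Finset V), R ⊆ F → R.card = A.card → A.card ≤ t → A.Nonempty →
      ∀ hne : ((F \ R) ∪ A).Nonempty,
      ∑ j : V, d j ^ p ≤ ∑ j : V, distSet j ((F \ R) ∪ A) hne ^ p := by
    intro R A hRF hcard hle hA hne
    have h := hlocal R hRF A hcard hle hne
    have hS0 : (0:ℝ) ≤ ∑ j : V, d j ^ p :=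
      Finset.sum_nonneg fun j _ => Real.rpow_nonneg (hd0 j) p
    have hS0' : (0:ℝ) ≤ ∑ j : V, distSet j ((F \ R) ∪ A) hne ^ p :=
      Finset.sum_nonneg fun j _ => Real.rpow_nonneg (distSet_nonneg _ _ _) p
    have h2 : ((∑ j : V, d j ^ p) ^ (1/p)) ^ p ≤
        ((∑ j : V, distSet j ((F \ R) ∪ A) hne ^ p) ^ (1/p)) ^ p :=
      Real.rpow_le_rpow (Real.rpow_nonneg hS0 _) h hppos.le
    rwa [← Real.rpow_mul hS0, ← Real.rpow_mul hS0', one_div_mul_cancel hpne,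
      Real.rpow_one, Real.rpow_one] at h2
  -- per-swap inequality
  have hgood : ∀ (R A : Finset V), R ⊆ F → R.card = A.card → A.card ≤ t → A.Nonempty →
      (∀ y ∈ Fstar, y ∉ A → η y ∉ R) → 0 ≤ U A + W R := by
    intro R A hRF hcard hle hA hprop
    have hne : ((F \ R) ∪ A).Nonempty := hA.mono Finset.subset_union_right
    have hmain := hswap R A hRF hcard hle hA hne
    have hper : ∀ j : V, distSet j ((F \ R) ∪ A) hne ^ p ≤
        d j ^ p + ((if σs j ∈ A then u j else 0) + (if σ j ∈ R then v j else 0)) := by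
      intro j
      by_cases h1 : σs j ∈ A
      · have hmem : σs j ∈ (F \ R) ∪ A := Finset.mem_union_right _ h1
        have : distSet j ((F \ R) ∪ A) hne ≤ dist j (σs j) := distSet_le j hne hmem
        have h2 : distSet j ((F \ R) ∪ A) hne ^ p ≤ dstar j ^ p := by
          apply Real.rpow_le_rpow (distSet_nonneg _ _ _) _ hppos.le
          rw [← hσsd j]; exact this
        have hvpart : (0:ℝ) ≤ if σ j ∈ R then v j else 0 := by
          by_cases h : σ j ∈ R <;> simp [h, hv0 j]
        simp only [h1, if_true, hu]
        linarith
      · by_cases h2 : σ j ∈ R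
        · -- reassign to η (σs j)
          have hyF : η (σs j) ∈ F := hηF _
          have hynR : η (σs j) ∉ R := hprop (σs j) (hσsF j) h1
          have hmem : η (σs j) ∈ (F \ R) ∪ A :=
            Finset.mem_union_left _ (Finset.mem_sdiff.2 ⟨hyF, hynR⟩)
          have hle1 : distSet j ((F \ R) ∪ A) hne ≤ dist j (η (σs j)) := distSet_le j hne hmem
          have hle2 : dist j (η (σs j)) ≤ 2 * dstar j + d j := by
            have t1 : dist j (η (σs j)) ≤ dist j (σs j) + dist (σs j) (η (σs j)) :=
              dist_triangle _ _ _
            have t2 : dist (σs j) (η (σs j)) ≤ dist (σs j) (σ j) := hηmin (σs j) (σ j) (hσF j)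
            have t3 : dist (σs j) (σ j) ≤ dist (σs j) j + dist j (σ j) := dist_triangle _ _ _
            have e1 : dist j (σs j) = dstar j := hσsd j
            have e2 : dist (σs j) j = dstar j := by rw [dist_comm]; exact hσsd j
            have e3 : dist j (σ j) = d j := hσd j
            linarith
          have h3 : distSet j ((F \ R) ∪ A) hne ^ p ≤ (2 * dstar j + d j) ^ p :=
            Real.rpow_le_rpow (distSet_nonneg _ _ _) (hle1.trans hle2) hppos.le
          simp only [h1, if_false, h2, if_true, hv]
          linarith
        · have hmem : σ j ∈ (F \ R) ∪ A :=
            Finset.mem_union_left _ (Finset.mem_sdiff.2 ⟨hσF j, h2⟩)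
          have h3 : distSet j ((F \ R) ∪ A) hne ^ p ≤ d j ^ p := by
            apply Real.rpow_le_rpow (distSet_nonneg _ _ _) _ hppos.le
            rw [← hσd j]; exact distSet_le j hne hmem
          simp only [h1, if_false, h2, if_false]
          linarith
    have hsum : ∑ j : V, distSet j ((F \ R) ∪ A) hne ^ p ≤
        ∑ j : V, (d j ^ p + ((if σs j ∈ A then u j else 0) + (if σ j ∈ R then v j else 0))) :=
      Finset.sum_le_sum fun j _ => hper j
    rw [Finset.sum_add_distrib, Finset.sum_add_distrib] at hsum
    have := hmain.trans hsum
    simp only [hU, hW]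
    linarith
  -- construction of the swap structure
  set I : Finset V := Fstar.image η with hI
  have hIF : I ⊆ F := by
    intro f hf
    obtain ⟨y, _, rfl⟩ := Finset.mem_image.1 hf
    exact hηF y
  set B : V → Finset V := fun f => Fstar.filter (fun y => η y = f) with hB
  have hBsub : ∀ f, B f ⊆ Fstar := fun f => Finset.filter_subset _ _
  have hmemB : ∀ y ∈ Fstar, y ∈ B (η y) := fun y hy => Finset.mem_filter.2 ⟨hy, rfl⟩
  have hηI : ∀ y ∈ Fstar, η y ∈ I := fun y hy => Finset.mem_image_of_mem η hy
  have hBne : ∀ f ∈ I, (B f).Nonempty := by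
    intro f hf
    obtain ⟨y, hy, rfl⟩ := Finset.mem_image.1 hf
    exact ⟨y, hmemB y hy⟩
  have hηB : ∀ f, ∀ y ∈ B f, η y = f := fun f y hy => (Finset.mem_filter.1 hy).2
  -- choose representatives
  have hbex : ∀ f : V, ∃ z, f ∈ I → z ∈ B f := by
    intro f
    by_cases h : f ∈ I
    · exact ⟨(hBne f h).choose, fun _ => (hBne f h).choose_spec⟩
    · exact ⟨f, fun hf => absurd hf h⟩
  choose b hb using hbex
  have hbB : ∀ f ∈ I, b f ∈ B f := fun f hf => hb f hf
  have hbstar : ∀ f ∈ I, b f ∈ Fstar := fun f hf => hBsub f (hbB f hf)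
  have hbinj : Set.InjOn b ↑I := by
    intro f hf g hg he
    have h1 : η (b f) = f := hηB f (b f) (hbB f hf)
    have h2 : η (b g) = g := hηB g (b g) (hbB g hg)
    rw [← h1, ← h2, he]
  -- leftover optimal centers and leftover own centers
  set Tt : Finset V := Fstar \ I.image b with hTt
  set F0 : Finset V := F \ I with hF0
  have himbsub : I.image b ⊆ Fstar := by
    intro z hz
    obtain ⟨f, hf, rfl⟩ := Finset.mem_image.1 hz
    exact hbstar f hf
  have hcardT : Tt.card = k - I.card := by
    rw [hTt, Finset.card_sdiff_of_subset himbsub, Finset.card_image_of_injOn hbinj, hcardFstar]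
  have hcardF0 : F0.card = k - I.card := by
    rw [hF0, Finset.card_sdiff_of_subset hIF, hcardF]
  have hcc : Tt.card = F0.card := by rw [hcardT, hcardF0]
  set e := Finset.equivOfCardEq hcc with he
  set g : V → V := fun y => if h : y ∈ Tt then ((e ⟨y, h⟩ : F0) : V) else y with hg
  have hgF0 : ∀ y ∈ Tt, g y ∈ F0 := by
    intro y hy
    simp only [hg, dif_pos hy]
    exact (e ⟨y, hy⟩).2
  have hginj : ∀ y ∈ Tt, ∀ z ∈ Tt, g y = g z → y = z := by
    intro y hy z hz hyz
    simp only [hg, dif_pos hy, dif_pos hz] at hyz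
    have : e ⟨y, hy⟩ = e ⟨z, hz⟩ := Subtype.coe_injective hyz
    simpa using (e.injective this)
  have hgsurj : ∀ z ∈ F0, ∃ y, y ∈ Tt ∧ g y = z := by
    intro z hz
    refine ⟨(e.symm ⟨z, hz⟩ : V), (e.symm ⟨z, hz⟩).2, ?_⟩
    simp only [hg, dif_pos (e.symm ⟨z, hz⟩).2]
    have : (⟨(e.symm ⟨z, hz⟩ : V), (e.symm ⟨z, hz⟩).2⟩ : {x // x ∈ Tt}) = e.symm ⟨z, hz⟩ := rfl
    rw [this, Equiv.apply_symm_apply]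
  -- membership in Tt
  have hTmem : ∀ y ∈ Fstar, (y ∈ Tt ↔ y ≠ b (η y)) := by
    intro y hy
    rw [hTt, Finset.mem_sdiff]
    constructor
    · rintro ⟨-, hni⟩ hyb
      exact hni (Finset.mem_image.2 ⟨η y, hηI y hy, hyb.symm⟩)
    · intro hne
      refine ⟨hy, fun hmem => ?_⟩
      obtain ⟨f, hf, hbf⟩ := Finset.mem_image.1 hmem
      have : η y = f := by rw [← hbf]; exact hηB f (b f) (hbB f hf)
      exact hne (by rw [this, hbf])
  -- the padding sets
  set S : V → Finset V := fun f => ((B f).erase (b f)).image g with hS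
  have hersub : ∀ f ∈ I, (B f).erase (b f) ⊆ Tt := by
    intro f hf y hy
    obtain ⟨hne, hyB⟩ := Finset.mem_erase.1 hy
    have hyst : y ∈ Fstar := hBsub f hyB
    rw [hTmem y hyst]
    rw [hηB f y hyB]
    exact hne
  have hSF0 : ∀ f ∈ I, S f ⊆ F0 := by
    intro f hf x hx
    obtain ⟨y, hy, rfl⟩ := Finset.mem_image.1 hx
    exact hgF0 y (hersub f hf hy)
  have hcardS : ∀ f ∈ I, (S f).card = (B f).card - 1 := by
    intro f hf
    rw [hS]
    rw [Finset.card_image_of_injOn (fun y hy z hz => hginj y (hersub f hf hy) z (hersub f hf hz))]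
    rw [Finset.card_erase_of_mem (hbB f hf)]
  have hfS : ∀ f ∈ I, f ∉ S f := by
    intro f hf hmem
    have := hSF0 f hf hmem
    rw [hF0, Finset.mem_sdiff] at this
    exact this.2 hf
  have hSsubF : ∀ f ∈ I, S f ⊆ F := fun f hf =>
    (hSF0 f hf).trans (by rw [hF0]; exact Finset.sdiff_subset)
  -- sum identity 1 : fibers of η partition Fstar
  have hSum1 : ∀ j : V, ∑ f ∈ I, (if σs j ∈ B f then u j else 0) = u j := by
    intro j
    have h1 : ∀ f ∈ I, (if σs j ∈ B f then u j else 0) = (if η (σs j) = f then u j else 0) := by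
      intro f hf
      congr 1
      simp only [hB, Finset.mem_filter, eq_iff_iff]
      constructor
      · rintro ⟨-, h⟩; exact h
      · intro h; exact ⟨hσsF j, h⟩
    rw [Finset.sum_congr rfl h1, Finset.sum_ite_eq, if_pos (hηI (σs j) (hσsF j))]
  -- sum identity 2 : the sets insert f (S f), f ∈ I, partition F
  have hSum2 : ∀ j : V, ∑ f ∈ I, (if σ j ∈ insert f (S f) then v j else 0) = v j := by
    intro j
    set x : V := σ j with hx
    have hxF : x ∈ F := hσF j
    by_cases hxI : x ∈ I
    · have h1 : ∀ f ∈ I, (if x ∈ insert f (S f) then v j else 0) = (if x = f then v j else 0) := by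
        intro f hf
        congr 1
        simp only [Finset.mem_insert, eq_iff_iff]
        constructor
        · rintro (h | h)
          · exact h
          · exact absurd ((hSF0 f hf h)) (by rw [hF0, Finset.mem_sdiff]; exact fun hc => hc.2 hxI)
        · intro h; exact Or.inl h
      rw [Finset.sum_congr rfl h1]
      rw [Finset.sum_ite_eq I x (fun _ => v j), if_pos hxI]
    · have hxF0 : x ∈ F0 := by rw [hF0, Finset.mem_sdiff]; exact ⟨hxF, hxI⟩
      obtain ⟨y, hyT, hgy⟩ := hgsurj x hxF0
      have hyst : y ∈ Fstar := by
        have := hyT; rw [hTt, Finset.mem_sdiff] at this; exact this.1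
      have h1 : ∀ f ∈ I, (if x ∈ insert f (S f) then v j else 0) = (if η y = f then v j else 0) := by
        intro f hf
        congr 1
        simp only [Finset.mem_insert, eq_iff_iff]
        constructor
        · rintro (h | h)
          · exact absurd hf (by rw [← h]; exact hxI)
          · obtain ⟨y', hy', hgy'⟩ := Finset.mem_image.1 h
            have hy'T : y' ∈ Tt := hersub f hf hy'
            have : y' = y := hginj y' hy'T y hyT (by rw [hgy', hgy])
            rw [← this]
            exact hηB f y' ((Finset.mem_erase.1 hy').2)
        · intro hef
          right
          rw [hS]
          apply Finset.mem_image.2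
          refine ⟨y, ?_, hgy⟩
          apply Finset.mem_erase.2
          constructor
          · rw [← hef]
            exact (hTmem y hyst).1 hyT
          · rw [← hef]; exact hmemB y hyst
      rw [Finset.sum_congr rfl h1, Finset.sum_ite_eq, if_pos (hηI y hyst)]
  -- additivity over singletons
  have hUadd : ∀ C : Finset V, ∑ x ∈ C, U {x} = U C := by
    intro C
    simp only [hU, Finset.mem_singleton]
    rw [Finset.sum_comm]
    apply Finset.sum_congr rfl
    intro j _
    rw [Finset.sum_ite_eq C (σs j) (fun _ => u j)]
  have hWadd : ∀ C : Finset V, ∑ x ∈ C, W {x} = W C := by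
    intro C
    simp only [hW, Finset.mem_singleton]
    rw [Finset.sum_comm]
    apply Finset.sum_congr rfl
    intro j _
    rw [Finset.sum_ite_eq C (σ j) (fun _ => v j)]
  have hWmono : ∀ C C' : Finset V, C ⊆ C' → W C ≤ W C' := by
    intro C C' hsub
    apply Finset.sum_le_sum
    intro j _
    by_cases h : σ j ∈ C
    · rw [if_pos h, if_pos (hsub h)]
    · rw [if_neg h]
      by_cases h' : σ j ∈ C' <;> simp [h', hv0 j]
  -- per-group inequality
  have hgroup : ∀ f ∈ I, 0 ≤ U (B f) + lam * W (insert f (S f)) := by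
    intro f hf
    have hq1 : 1 ≤ (B f).card := Finset.card_pos.2 (hBne f hf)
    have hcardA : (insert f (S f)).card = (B f).card := by
      rw [Finset.card_insert_of_notMem (hfS f hf), hcardS f hf]
      omega
    have hAF : insert f (S f) ⊆ F := Finset.insert_subset (hIF hf) (hSsubF f hf)
    by_cases hqt : (B f).card ≤ t
    · -- one full swap
      have h := hgood (insert f (S f)) (B f) hAF (by rw [hcardA]) hqt (hBne f hf) ?_
      · have : 0 ≤ (lam - 1) * W (insert f (S f)) :=
          mul_nonneg (by linarith) (hWnn _)
        linarith
      · intro y hy hyB hyR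
        rcases Finset.mem_insert.1 hyR with h | h
        · exact hyB (h ▸ hmemB y hy)
        · have h1 : η y ∈ I := hηI y hy
          have h2 := hSF0 f hf h
          rw [hF0, Finset.mem_sdiff] at h2
          exact h2.2 h1
    · -- many single swaps
      push_neg at hqt
      have hsingle : ∀ s' ∈ S f, ∀ b' ∈ B f, 0 ≤ U {b'} + W {s'} := by
        intro s' hs' b' hb'
        apply hgood {s'} {b'} (Finset.singleton_subset_iff.2 (hSsubF f hf hs'))
          (by simp) (by simpa using ht) (Finset.singleton_nonempty _)
        intro y hy _ hyR
        rw [Finset.mem_singleton] at hyR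
        have h1 : η y ∈ I := hηI y hy
        have h2 := hSF0 f hf hs'
        rw [hF0, Finset.mem_sdiff] at h2
        exact h2.2 (hyR ▸ h1)
      have hsum : (0:ℝ) ≤ ∑ s' ∈ S f, ∑ b' ∈ B f, (U {b'} + W {s'}) :=
        Finset.sum_nonneg fun s' hs' => Finset.sum_nonneg fun b' hb' => hsingle s' hs' b' hb'
      have hcomp : ∑ s' ∈ S f, ∑ b' ∈ B f, (U {b'} + W {s'})
          = ((S f).card : ℝ) * U (B f) + ((B f).card : ℝ) * W (S f) := by
        have inner : ∀ s' : V, ∑ b' ∈ B f, (U {b'} + W {s'})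
            = U (B f) + ((B f).card : ℝ) * W {s'} := by
          intro s'
          rw [Finset.sum_add_distrib, hUadd, Finset.sum_const, nsmul_eq_mul]
        rw [Finset.sum_congr rfl (fun s' _ => inner s'), Finset.sum_add_distrib,
          Finset.sum_const, nsmul_eq_mul, ← Finset.mul_sum, hWadd]
      rw [hcomp] at hsum
      -- arithmetic
      have hqcast : ((S f).card : ℝ) = ((B f).card : ℝ) - 1 := by
        rw [hcardS f hf]
        have : (1:ℕ) ≤ (B f).card := hq1
        push_cast [Nat.cast_sub this]
        ring
      set q : ℝ := ((B f).card : ℝ) with hqdef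
      have hqt' : (t:ℝ) + 1 ≤ q := by
        rw [hqdef]; exact_mod_cast hqt
      have hWs := hWnn (S f)
      have hWi := hWmono (S f) (insert f (S f)) (Finset.subset_insert _ _)
      rw [hqcast] at hsum
      -- lam * (q-1) ≥ q
      have hlq : q ≤ lam * (q - 1) := by
        rw [hlam]
        have h1 : (1:ℝ) ≤ (q-1)/t := by
          rw [le_div_iff₀ htpos]; linarith
        have : (1 + 1/(t:ℝ)) * (q-1) = (q-1) + (q-1)/t := by field_simp
        rw [this]; linarith
      have hq1' : (0:ℝ) < q - 1 := by
        have : (1:ℝ) ≤ (t:ℝ) := by exact_mod_cast ht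
        linarith
      -- conclude
      by_contra hcon
      push_neg at hcon
      have c1 : lam * W (S f) ≤ lam * W (insert f (S f)) :=
        mul_le_mul_of_nonneg_left hWi (by linarith)
      have c2 : U (B f) + lam * W (S f) < 0 := by linarith
      have c3 : (q - 1) * (U (B f) + lam * W (S f)) < 0 :=
        mul_neg_of_pos_of_neg hq1' c2
      nlinarith [mul_le_mul_of_nonneg_right hlq hWs]
  -- the star inequality
  have hstar : 0 ≤ (∑ j : V, u j) + lam * ∑ j : V, v j := by
    have h0 : (0:ℝ) ≤ ∑ f ∈ I, (U (B f) + lam * W (insert f (S f))) :=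
      Finset.sum_nonneg hgroup
    have e1 : ∑ f ∈ I, U (B f) = ∑ j : V, u j := by
      simp only [hU]
      rw [Finset.sum_comm]
      exact Finset.sum_congr rfl fun j _ => hSum1 j
    have e2 : ∑ f ∈ I, W (insert f (S f)) = ∑ j : V, v j := by
      simp only [hW]
      rw [Finset.sum_comm]
      exact Finset.sum_congr rfl fun j _ => hSum2 j
    rw [Finset.sum_add_distrib, e1, ← Finset.mul_sum, e2] at h0
    exact h0
  clear hgroup hSum1 hSum2 hUadd hWadd hWmono hgood hswap hTmem hgsurj hginj hgF0
  -- rearranged star inequality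
  set Sd : ℝ := ∑ j : V, d j ^ p with hSd
  set Sds : ℝ := ∑ j : V, dstar j ^ p with hSds
  set Sv : ℝ := ∑ j : V, (2 * dstar j + d j) ^ p with hSv
  have hSd0 : 0 ≤ Sd := Finset.sum_nonneg fun j _ => Real.rpow_nonneg (hd0 j) p
  have hSds0 : 0 ≤ Sds := Finset.sum_nonneg fun j _ => Real.rpow_nonneg (hds0 j) p
  have hSv0 : 0 ≤ Sv := Finset.sum_nonneg fun j _ =>
    Real.rpow_nonneg (by have := hds0 j; have := hd0 j; linarith) p
  have hstar' : (1 + lam) * Sd ≤ Sds + lam * Sv := by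
    have e1 : ∑ j : V, u j = Sds - Sd := by
      simp only [hu, hSds, hSd]; rw [Finset.sum_sub_distrib]
    have e2 : ∑ j : V, v j = Sv - Sd := by
      simp only [hv, hSv, hSd]; rw [Finset.sum_sub_distrib]
    rw [e1, e2, mul_sub] at hstar
    nlinarith [hstar]
  have hPhiF : phiP p F hF = Sd ^ (1/p) := rfl
  have hPhiFs : phiP p Fstar hFstar = Sds ^ (1/p) := rfl
  have hD0 : 0 ≤ Sd ^ (1/p) := Real.rpow_nonneg hSd0 _
  have hDs0' : 0 ≤ Sds ^ (1/p) := Real.rpow_nonneg hSds0 _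
  have hinv : ∀ x : ℝ, 0 ≤ x → (x ^ (1/p)) ^ p = x := by
    intro x hx
    rw [← Real.rpow_mul hx, one_div_mul_cancel hpne, Real.rpow_one]
  refine ⟨?_, ?_, ?_⟩
  · -- p = 1
    intro hp1
    subst hp1
    simp only [Real.rpow_one] at hSd hSds hSv
    rw [hPhiF, hPhiFs]
    norm_num [Real.rpow_one]
    have hSveq : Sv = 2 * Sds + Sd := by
      rw [hSv, hSds, hSd, Finset.mul_sum, ← Finset.sum_add_distrib]
    rw [hSveq] at hstar'
    have hco : (3 + 2/(t:ℝ)) = 1 + 2 * lam := by rw [hlam]; ring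
    rw [hco]
    nlinarith [hstar']
  · -- p = 2
    intro hp2
    subst hp2
    have h2 : ∀ x : ℝ, x ^ (2:ℝ) = x ^ 2 := fun x => by
      rw [← Real.rpow_natCast x 2]; norm_num
    set C : ℝ := ∑ j : V, dstar j * d j with hC
    have hC0 : 0 ≤ C := Finset.sum_nonneg fun j _ => mul_nonneg (hds0 j) (hd0 j)
    have hSveq : Sv = 4 * Sds + 4 * C + Sd := by
      rw [hSv, hSds, hSd, hC]
      simp only [h2]
      rw [Finset.mul_sum, Finset.mul_sum, ← Finset.sum_add_distrib, ← Finset.sum_add_distrib]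
      apply Finset.sum_congr rfl
      intro j _
      ring
    rw [hSveq] at hstar'
    -- Cauchy-Schwarz
    have hCS : C ^ 2 ≤ Sds * Sd := by
      rw [hC, hSds, hSd]
      simp only [h2]
      exact Finset.sum_mul_sq_le_sq_mul_sq Finset.univ dstar d
    set D : ℝ := Sd ^ (1/(2:ℝ)) with hDdef
    set Ds : ℝ := Sds ^ (1/(2:ℝ)) with hDsdef
    have hDsq : D ^ 2 = Sd := by
      rw [hDdef, ← h2, ← Real.rpow_mul hSd0]
      norm_num [Real.rpow_one]
    have hDssq : Ds ^ 2 = Sds := by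
      rw [hDsdef, ← h2, ← Real.rpow_mul hSds0]
      norm_num [Real.rpow_one]
    rw [hPhiF, hPhiFs]
    have hCDsD : C ≤ Ds * D := by
      have h1 : (Ds * D) ^ 2 = Sds * Sd := by rw [mul_pow, hDsq, hDssq]
      nlinarith [hCS, hC0, mul_nonneg hDs0' hD0]
    have hkey : D^2 ≤ (1 + 4*lam) * Ds^2 + 4 * lam * (Ds * D) := by
      rw [hDsq, hDssq]
      nlinarith [hstar', mul_le_mul_of_nonneg_left hCDsD (by linarith : (0:ℝ) ≤ 4*lam)]
    have hco : (5 + 4/(t:ℝ)) = 1 + 4 * lam := by rw [hlam]; ring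
    rw [hco]
    by_contra hcon
    push_neg at hcon
    have hDpos : 0 < D :=
      lt_of_le_of_lt (mul_nonneg (by linarith : (0:ℝ) ≤ 1 + 4*lam) hDs0') hcon
    nlinarith [mul_pos (sub_pos.2 hcon) (by linarith : (0:ℝ) < D + Ds)]
  · -- 2 ≤ p
    intro hp2
    set D : ℝ := Sd ^ (1/p) with hDdef
    set Ds : ℝ := Sds ^ (1/p) with hDsdef
    -- Minkowski
    have hnn1 : ∀ j ∈ Finset.univ, (0:ℝ) ≤ 2 * dstar j := fun j _ => by
      have := hds0 j; linarith
    have hnn2 : ∀ j ∈ Finset.univ, (0:ℝ) ≤ d j := fun j _ => hd0 j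
    have hmink := Real.Lp_add_le_of_nonneg (s := Finset.univ)
      (f := fun j => 2 * dstar j) (g := d) hp hnn1 hnn2
    have he1 : (∑ j : V, (2 * dstar j) ^ p) = 2 ^ p * Sds := by
      rw [hSds, Finset.mul_sum]
      apply Finset.sum_congr rfl
      intro j _
      exact Real.mul_rpow (by norm_num) (hds0 j)
    have he2 : ((2:ℝ) ^ p * Sds) ^ (1/p) = 2 * Ds := by
      rw [Real.mul_rpow (by positivity) hSds0, hDsdef, ← Real.rpow_mul (by norm_num : (0:ℝ) ≤ 2),
        mul_one_div, div_self hpne, Real.rpow_one]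
    have hmink2 : Sv ^ (1/p) ≤ 2 * Ds + D := by
      have : (∑ j : V, (2 * dstar j + d j) ^ p) ^ (1/p) ≤
          (∑ j : V, (2 * dstar j) ^ p) ^ (1/p) + (∑ j : V, d j ^ p) ^ (1/p) := hmink
      rw [he1, he2] at this
      exact this
    have hSvle : Sv ≤ (2 * Ds + D) ^ p := by
      have h1 : (Sv ^ (1/p)) ^ p ≤ (2 * Ds + D) ^ p :=
        Real.rpow_le_rpow (Real.rpow_nonneg hSv0 _) hmink2 hppos.le
      rwa [hinv Sv hSv0] at h1
    have hDp : D ^ p = Sd := by rw [hDdef]; exact hinv Sd hSd0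
    have hDsp : Ds ^ p = Sds := by rw [hDsdef]; exact hinv Sds hSds0
    have hfin : (1 + lam) * D ^ p ≤ Ds ^ p + lam * (2 * Ds + D) ^ p := by
      rw [hDp, hDsp]
      have hh := mul_le_mul_of_nonneg_left hSvle (by linarith : (0:ℝ) ≤ lam)
      linarith [hstar']
    have := scalar_ge2 hp2 hlam1 hlam2 hD0 hDs0' hfin
    rw [hPhiF, hPhiFs]
    have hco : (3 + 2/(t:ℝ)) * p = (2*lam + 1) * p := by rw [hlam]; ring
    rw [hco]
    exact this
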